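/- (Hayashi–Nagaoka operator inequality) For positive semidefinite operators S and T on a finite-dimensional Hilbert space with 0 ≤ S ≤ I, the following operator inequality holds: I − (S+T)^{-1/2} S (S+T)^{-1/2} ≤ 2(I − S) + 4T, where (S+T)^{-1/2} denotes the square root of the generalized (Moore–Penrose) inverse of S+T. -/

import Mathlib

open Matrix
open scoped ComplexOrder

/-- The Loewner order: `A ≤ B` iff `B - A` is positive semidefinite. -/
def Loewner {d : ℕ} (A B : Matrix (Fin d) (Fin d) ℂ) : Prop :=
  (B - A).PosSemidef

/-- The square root of the Moore–Penrose (generalized) inverse of a Hermitian matrix: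
apply the function `x ↦ 1/√x` (with value `0` at `0`) via the functional calculus. -/
noncomputable def pinvSqrt {d : ℕ} {A : Matrix (Fin d) (Fin d) ℂ}
    (hA : A.IsHermitian) : Matrix (Fin d) (Fin d) ℂ :=
  hA.cfc (fun x => if x = 0 then 0 else (Real.sqrt x)⁻¹)

open scoped MatrixOrder in
noncomputable def Matrix.PosSemidef.sqrt {d : ℕ} {A : Matrix (Fin d) (Fin d) ℂ}
    (_ : A.PosSemidef) : Matrix (Fin d) (Fin d) ℂ :=
  CFC.sqrt A

open scoped MatrixOrder in
lemma Matrix.PosSemidef.sqrt_mul_self {d : ℕ} {A : Matrix (Fin d) (Fin d) ℂ}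
    (hA : A.PosSemidef) : hA.sqrt * hA.sqrt = A :=
  CFC.sqrt_mul_sqrt_self A hA.nonneg

open scoped MatrixOrder in
lemma Matrix.PosSemidef.posSemidef_sqrt {d : ℕ} {A : Matrix (Fin d) (Fin d) ℂ}
    (hA : A.PosSemidef) : hA.sqrt.PosSemidef :=
  (CFC.sqrt_nonneg A).posSemidef

namespace HNaux

variable {d : ℕ} {A : Matrix (Fin d) (Fin d) ℂ} (hA : A.IsHermitian)

lemma star_mul_self_unitary :
    star (hA.eigenvectorUnitary : Matrix (Fin d) (Fin d) ℂ) * (hA.eigenvectorUnitary : Matrix (Fin d) (Fin d) ℂ) = 1 :=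
  (Matrix.mem_unitaryGroup_iff').mp (hA.eigenvectorUnitary).2

lemma mcfc_mul (f g : ℝ → ℝ) : hA.cfc f * hA.cfc g = hA.cfc (fun x => f x * g x) := by
  unfold Matrix.IsHermitian.cfc
  have h1 := star_mul_self_unitary hA
  set U := (hA.eigenvectorUnitary : Matrix (Fin d) (Fin d) ℂ)
  have hd : diagonal (RCLike.ofReal ∘ f ∘ hA.eigenvalues) * diagonal (RCLike.ofReal ∘ g ∘ hA.eigenvalues)
      = (diagonal (RCLike.ofReal ∘ (fun x => f x * g x) ∘ hA.eigenvalues) : Matrix (Fin d) (Fin d) ℂ) := by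
    rw [diagonal_mul_diagonal]
    exact congrArg diagonal (by funext i; simp)
  calc U * diagonal (RCLike.ofReal ∘ f ∘ hA.eigenvalues) * star U *
        (U * diagonal (RCLike.ofReal ∘ g ∘ hA.eigenvalues) * star U)
      = U * (diagonal (RCLike.ofReal ∘ f ∘ hA.eigenvalues) * (star U * U) *
          diagonal (RCLike.ofReal ∘ g ∘ hA.eigenvalues)) * star U := by
        simp only [mul_assoc]
    _ = U * diagonal (RCLike.ofReal ∘ (fun x => f x * g x) ∘ hA.eigenvalues) * star U := by
        rw [h1, mul_one, hd]

lemma mcfc_add (f g : ℝ → ℝ) : hA.cfc f + hA.cfc g = hA.cfc (fun x => f x + g x) := by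
  unfold Matrix.IsHermitian.cfc
  simp only [Unitary.conjStarAlgAut_apply, Unitary.coe_star]
  rw [← add_mul, ← mul_add, diagonal_add]
  rw [show (fun i => (RCLike.ofReal ∘ f ∘ hA.eigenvalues) i + (RCLike.ofReal ∘ g ∘ hA.eigenvalues) i)
      = (RCLike.ofReal ∘ (fun x => f x + g x) ∘ hA.eigenvalues : Fin d → ℂ) from by funext i; simp]

lemma mcfc_smul (c : ℝ) (f : ℝ → ℝ) :
    hA.cfc (fun x => c * f x) = (c : ℂ) • hA.cfc f := by
  unfold Matrix.IsHermitian.cfc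
  simp only [Unitary.conjStarAlgAut_apply, Unitary.coe_star]
  have hd : (diagonal (RCLike.ofReal ∘ (fun x => c * f x) ∘ hA.eigenvalues) : Matrix (Fin d) (Fin d) ℂ)
      = (c : ℂ) • diagonal (RCLike.ofReal ∘ f ∘ hA.eigenvalues) := by
    rw [← diagonal_smul]
    exact congrArg diagonal (by funext i; simp [Complex.real_smul])
  rw [hd, mul_smul_comm, smul_mul_assoc]

lemma mcfc_id' : hA.cfc (fun x => x) = A := by
  unfold Matrix.IsHermitian.cfc
  exact (hA.spectral_theorem).symm

lemma mcfc_one : hA.cfc (fun _ => 1) = 1 := by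
  unfold Matrix.IsHermitian.cfc
  simp only [Unitary.conjStarAlgAut_apply, Unitary.coe_star]
  have h2 := (Matrix.mem_unitaryGroup_iff).mp (hA.eigenvectorUnitary).2
  have hd : (diagonal (RCLike.ofReal ∘ (fun _ : ℝ => (1:ℝ)) ∘ hA.eigenvalues) : Matrix (Fin d) (Fin d) ℂ) = 1 := by
    have : (RCLike.ofReal ∘ (fun _ : ℝ => (1:ℝ)) ∘ hA.eigenvalues) = fun _ : Fin d => (1 : ℂ) := by
      funext i; simp
    rw [this, diagonal_one]
  rw [hd, mul_one, h2]

lemma mcfc_zero' : hA.cfc (fun _ => 0) = 0 := by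
  unfold Matrix.IsHermitian.cfc
  simp only [Unitary.conjStarAlgAut_apply, Unitary.coe_star]
  have hd : (diagonal (RCLike.ofReal ∘ (fun _ : ℝ => (0:ℝ)) ∘ hA.eigenvalues) : Matrix (Fin d) (Fin d) ℂ) = 0 := by
    have : (RCLike.ofReal ∘ (fun _ : ℝ => (0:ℝ)) ∘ hA.eigenvalues) = fun _ : Fin d => (0 : ℂ) := by
      funext i; simp
    rw [this, diagonal_zero]
  rw [hd, mul_zero, zero_mul]

lemma mcfc_herm (f : ℝ → ℝ) : (hA.cfc f).IsHermitian := by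
  unfold Matrix.IsHermitian.cfc
  set U := (hA.eigenvectorUnitary : Matrix (Fin d) (Fin d) ℂ)
  have hd : (diagonal (RCLike.ofReal ∘ f ∘ hA.eigenvalues) : Matrix (Fin d) (Fin d) ℂ)ᴴ
      = diagonal (RCLike.ofReal ∘ f ∘ hA.eigenvalues) := by
    rw [diagonal_conjTranspose]
    exact congrArg diagonal (by funext i; simp [Pi.star_def])
  simp only [Unitary.conjStarAlgAut_apply, Unitary.coe_star]
  show (U * _ * star U)ᴴ = _
  rw [conjTranspose_mul, conjTranspose_mul, hd, star_eq_conjTranspose U,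
    conjTranspose_conjTranspose, ← star_eq_conjTranspose U, mul_assoc]

lemma mcfc_psd (f : ℝ → ℝ) (h : ∀ i, 0 ≤ f (hA.eigenvalues i)) :
    (hA.cfc f).PosSemidef := by
  unfold Matrix.IsHermitian.cfc
  set U := (hA.eigenvectorUnitary : Matrix (Fin d) (Fin d) ℂ)
  have hdiag : (diagonal (RCLike.ofReal ∘ f ∘ hA.eigenvalues) : Matrix (Fin d) (Fin d) ℂ).PosSemidef := by
    apply PosSemidef.diagonal
    intro i
    simpa using h i
  have := hdiag.mul_mul_conjTranspose_same U
  rwa [← star_eq_conjTranspose U] at this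

lemma psd_smul {M : Matrix (Fin d) (Fin d) ℂ} (h : M.PosSemidef) {c : ℝ} (hc : 0 ≤ c) :
    ((c : ℂ) • M).PosSemidef := by
  refine Matrix.PosSemidef.of_dotProduct_mulVec_nonneg ?_ ?_
  · unfold Matrix.IsHermitian
    rw [conjTranspose_smul, h.1]
    congr 1
    simp [Complex.star_def, Complex.conj_ofReal]
  · intro x
    rw [smul_mulVec, dotProduct_smul, smul_eq_mul]
    exact mul_nonneg (by simpa using hc) (h.dotProduct_mulVec_nonneg x)

open scoped MatrixOrder in
lemma posSemidef_iff_eq_transpose_mul_self {X : Matrix (Fin d) (Fin d) ℂ} :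
    X.PosSemidef ↔ ∃ B : Matrix (Fin d) (Fin d) ℂ, X = Bᴴ * B := by
  constructor
  · intro hX
    obtain ⟨B, hB⟩ := CStarAlgebra.nonneg_iff_eq_star_mul_self.mp hX.nonneg
    exact ⟨B, hB⟩
  · rintro ⟨B, rfl⟩
    exact posSemidef_conjTranspose_mul_self B

lemma psd_sum_zero {X Y : Matrix (Fin d) (Fin d) ℂ} (hX : X.PosSemidef) (hY : Y.PosSemidef)
    (h : X + Y = 0) : X = 0 := by
  obtain ⟨B, hB⟩ := posSemidef_iff_eq_transpose_mul_self.mp hX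
  have key : ∀ v : Fin d → ℂ, B *ᵥ v = 0 := by
    intro v
    have h1 : star v ⬝ᵥ (X *ᵥ v) + star v ⬝ᵥ (Y *ᵥ v) = 0 := by
      rw [← dotProduct_add, ← add_mulVec, h, zero_mulVec, dotProduct_zero]
    have h2 : star v ⬝ᵥ (X *ᵥ v) = 0 :=
      ((add_eq_zero_iff_of_nonneg (hX.dotProduct_mulVec_nonneg v) (hY.dotProduct_mulVec_nonneg v)).mp h1).1
    rw [hB, ← mulVec_mulVec, dotProduct_mulVec, ← star_mulVec,
      dotProduct_star_self_eq_zero] at h2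
    exact h2
  have hB0 : B = 0 := by
    ext i j
    have := congrFun (key (Pi.single j 1)) i
    rw [mulVec_single] at this
    simpa using this
  rw [hB, hB0, conjTranspose_zero, mul_zero]


lemma mcfc_sub (f g : ℝ → ℝ) : hA.cfc f - hA.cfc g = hA.cfc (fun x => f x - g x) := by
  unfold Matrix.IsHermitian.cfc
  simp only [Unitary.conjStarAlgAut_apply, Unitary.coe_star]
  rw [← sub_mul, ← mul_sub, diagonal_sub]
  rw [show (fun i => (RCLike.ofReal ∘ f ∘ hA.eigenvalues) i - (RCLike.ofReal ∘ g ∘ hA.eigenvalues) i)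
      = (RCLike.ofReal ∘ (fun x => f x - g x) ∘ hA.eigenvalues : Fin d → ℂ) from by funext i; simp]

lemma csmul_nsmul (m : ℕ) [m.AtLeastTwo] (M : Matrix (Fin d) (Fin d) ℂ) :
    ((OfNat.ofNat m : ℝ) : ℂ) • M = (OfNat.ofNat m : ℕ) • M := by
  rw [show ((OfNat.ofNat m : ℝ) : ℂ) = ((OfNat.ofNat m : ℕ) : ℂ) by push_cast; ring]
  exact Nat.cast_smul_eq_nsmul ℂ _ M

lemma rsmul_nsmul (m : ℕ) [m.AtLeastTwo] (M : Matrix (Fin d) (Fin d) ℂ) :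
    (OfNat.ofNat m : ℝ) • M = (OfNat.ofNat m : ℕ) • M := by
  rw [show (OfNat.ofNat m : ℝ) = ((OfNat.ofNat m : ℕ) : ℝ) by push_cast; ring]
  exact Nat.cast_smul_eq_nsmul ℝ _ M

lemma mcfc_ofNat_mul (m : ℕ) [m.AtLeastTwo] (f : ℝ → ℝ) :
    hA.cfc (fun x => (OfNat.ofNat m : ℝ) * f x) = (OfNat.ofNat m : ℕ) • hA.cfc f := by
  rw [mcfc_smul, csmul_nsmul]

lemma psd_nsmul {M : Matrix (Fin d) (Fin d) ℂ} (h : M.PosSemidef) (n : ℕ) :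
    (n • M).PosSemidef := by
  induction n with
  | zero => simpa [zero_nsmul] using (Matrix.PosSemidef.zero (n := Fin d) (R := ℂ))
  | succ k ih => rw [succ_nsmul]; exact ih.add h


noncomputable def pf (x : ℝ) : ℝ := if x = 0 then 0 else (Real.sqrt x)⁻¹
noncomputable def af (x : ℝ) : ℝ := (12*x - 2*Real.sqrt x)/(3+2*x)
noncomputable def df (x : ℝ) : ℝ := if x = 0 then 0 else 6 - pf x - af x
noncomputable def h6f (x : ℝ) : ℝ := 36 + 144*x - 18*(af x * af x) - 12*(df x * x * df x)
noncomputable def pif (x : ℝ) : ℝ := if x = 0 then 0 else 1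
noncomputable def cf (x : ℝ) : ℝ := if x = 0 then 1 else 0

lemma af_zero : af 0 = 0 := by simp [af]

lemma sum_pdf (x : ℝ) : pf x + af x + df x = 6 * pif x := by
  by_cases h : x = 0
  · simp [pf, df, pif, h, af_zero]
  · simp only [pf, df, pif, if_neg h]
    ring

lemma h6f_nonneg (x : ℝ) (hx : 0 ≤ x) : 0 ≤ h6f x := by
  rcases eq_or_lt_of_le hx with h0 | hpos
  · rw [← h0]
    have : df 0 = 0 := by simp [df]
    simp [h6f, af_zero, this]
  · obtain ⟨L, hL, rfl⟩ : ∃ L : ℝ, 0 < L ∧ x = L*L :=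
      ⟨Real.sqrt x, Real.sqrt_pos.mpr hpos, (Real.mul_self_sqrt hx).symm⟩
    have hLne : L ≠ 0 := ne_of_gt hL
    have hxne : L*L ≠ 0 := by positivity
    have hsq : Real.sqrt (L*L) = L := Real.sqrt_mul_self hL.le
    have hden : (0:ℝ) < 3 + 2*(L*L) := by positivity
    have key : h6f (L*L) = 72*(L-1)^2*(4*L^2+8*L+1)/(3+2*(L*L)) := by
      unfold h6f df pf af
      rw [if_neg hxne, if_neg hxne, hsq]
      field_simp
      ring
    rw [key]
    apply div_nonneg _ hden.le
    have h1 : (0:ℝ) ≤ 4*L^2+8*L+1 := by nlinarith [sq_nonneg L]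
    have h2 : (0:ℝ) ≤ 72*(L-1)^2 := by positivity
    exact mul_nonneg h2 h1

end HNaux


open HNaux

/-- Hayashi–Nagaoka operator inequality: for `0 ≤ S ≤ I` and `0 ≤ T`,
`I − (S+T)^{-1/2} S (S+T)^{-1/2} ≤ 2(I − S) + 4T`. -/
theorem hayashi_nagaoka {d : ℕ} (S T : Matrix (Fin d) (Fin d) ℂ)
    (hS : S.PosSemidef) (hSI : Loewner S 1) (hT : T.PosSemidef)
    (hST : (S + T).IsHermitian) :
    Loewner (1 - pinvSqrt hST * S * pinvSqrt hST)
      ((2 : ℝ) • (1 - S) + (4 : ℝ) • T) := by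
  classical
  have hNpsd : (S + T).PosSemidef := hS.add hT
  have h1S : ((1 : Matrix (Fin d) (Fin d) ℂ) - S).PosSemidef := hSI
  show ((2:ℝ) • (1 - S) + (4:ℝ) • T - (1 - pinvSqrt hST * S * pinvSqrt hST)).PosSemidef
  rw [show pinvSqrt hST = hST.cfc pf from rfl]
  -- abbreviations (purely notational)
  set P := hST.cfc pf with hPdef
  set AA := hST.cfc af with hAAdef
  set DD := hST.cfc df with hDDdef
  set Pi := hST.cfc pif with hPidef
  set Cc := hST.cfc cf with hCcdef
  set X1 := hST.cfc (fun x => 2 * pf x - af x) with hX1def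
  set X2 := hST.cfc (fun x => 3 * pf x - df x) with hX2def
  set X3 := hST.cfc (fun x => 3 * af x - 2 * df x) with hX3def
  set Hm := hST.cfc h6f with hHmdef
  -- decomposition of the X's
  have hX1 : X1 = 2 • P - AA := by
    rw [hX1def, ← mcfc_sub, mcfc_ofNat_mul]
  have hX2 : X2 = 3 • P - DD := by
    rw [hX2def, ← mcfc_sub, mcfc_ofNat_mul]
  have hX3 : X3 = 3 • AA - 2 • DD := by
    rw [hX3def, ← mcfc_sub, mcfc_ofNat_mul, mcfc_ofNat_mul]
  -- P + AA + DD = 6 • Pi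
  have hW : P + AA + DD = 6 • Pi := by
    rw [hPdef, hAAdef, hDDdef, hPidef, mcfc_add, mcfc_add]
    rw [show (fun x => pf x + af x + df x) = (fun x => 6 * pif x) from funext sum_pdf]
    rw [mcfc_ofNat_mul]
  -- support facts
  have hCcH : Ccᴴ = Cc := by rw [hCcdef]; exact (mcfc_herm hST _).eq
  have hPiH : Piᴴ = Pi := by rw [hPidef]; exact (mcfc_herm hST _).eq
  have hPiCc : Pi + Cc = 1 := by
    rw [hPidef, hCcdef, mcfc_add]
    rw [show (fun x => pif x + cf x) = (fun _ : ℝ => (1:ℝ)) from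
      funext (fun x => by by_cases h : x = 0 <;> simp [pif, cf, h])]
    exact mcfc_one hST
  have hCN : Cc * (S + T) * Cc = 0 := by
    conv_lhs => rw [← mcfc_id' hST]
    rw [hCcdef, mcfc_mul, mcfc_mul]
    rw [show (fun x => cf x * x * cf x) = (fun _ : ℝ => (0:ℝ)) from
      funext (fun x => by by_cases h : x = 0 <;> simp [cf, h])]
    exact mcfc_zero' hST
  have hCSC : (Cc * S * Cc).PosSemidef := by
    have := hS.mul_mul_conjTranspose_same Cc
    rwa [hCcH] at this
  have hCTC : (Cc * T * Cc).PosSemidef := by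
    have := hT.mul_mul_conjTranspose_same Cc
    rwa [hCcH] at this
  have hCSC0 : Cc * S * Cc = 0 :=
    psd_sum_zero hCSC hCTC
      (by rw [show Cc*S*Cc + Cc*T*Cc = Cc*(S+T)*Cc from by noncomm_ring, hCN])
  have hR : hS.sqrt * hS.sqrt = S := hS.sqrt_mul_self
  have hRH : (hS.sqrt)ᴴ = hS.sqrt := hS.posSemidef_sqrt.1.eq
  have hRC : hS.sqrt * Cc = 0 := by
    have e : (hS.sqrt * Cc)ᴴ * (hS.sqrt * Cc) = Cc * S * Cc := by
      rw [conjTranspose_mul, hRH, hCcH]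
      calc Cc * hS.sqrt * (hS.sqrt * Cc) = Cc * (hS.sqrt * hS.sqrt) * Cc := by noncomm_ring
        _ = Cc * S * Cc := by rw [hR]
    exact Matrix.conjTranspose_mul_self_eq_zero.mp (e.trans hCSC0)
  have hSC : S * Cc = 0 := by
    have e2 : hS.sqrt * (hS.sqrt * Cc) = S * Cc := by rw [← mul_assoc, hR]
    rw [← e2, hRC, mul_zero]
  have hSPi : S * Pi = S := by
    have hPieq : Pi = 1 - Cc := by rw [← hPiCc]; noncomm_ring
    rw [hPieq, mul_sub, mul_one, hSC, sub_zero]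
  have hPiS : Pi * S = S := by
    have h' := congrArg conjTranspose hSPi
    rwa [conjTranspose_mul, hPiH, hS.1.eq] at h'
  have f5 : Pi * S * Pi = S := by rw [hPiS, hSPi]
  have f7 : (P + AA + DD) * S * (P + AA + DD) = 36 • S := by
    rw [hW]
    calc (6 • Pi) * S * (6 • Pi) = 36 • (Pi * S * Pi) := by noncomm_ring
      _ = 36 • S := by rw [f5]
  -- the functional-calculus identity for Hm
  have hAA2 : AA * AA = hST.cfc (fun x => af x * af x) := by
    rw [hAAdef]; exact mcfc_mul hST _ _
  have hDND : DD * (S + T) * DD = hST.cfc (fun x => df x * x * df x) := by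
    conv_lhs => rw [← mcfc_id' hST]
    rw [hDDdef, mcfc_mul, mcfc_mul]
  have estep : Hm + 18 • (AA * AA) + 12 • (DD * (S + T) * DD)
      = 36 • (1 : Matrix (Fin d) (Fin d) ℂ) + 144 • (S + T) := by
    rw [hAA2, hDND, hHmdef, ← mcfc_ofNat_mul hST 18, ← mcfc_ofNat_mul hST 12,
      mcfc_add, mcfc_add]
    rw [show (fun x => h6f x + 18 * (af x * af x) + 12 * (df x * x * df x))
        = (fun x : ℝ => 36 * 1 + 144 * x) from funext (fun x => by unfold h6f; ring)]
    rw [← mcfc_add, mcfc_ofNat_mul hST 36, mcfc_ofNat_mul hST 144, mcfc_one, mcfc_id']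
  have f6 : Hm = 36 • (1 : Matrix (Fin d) (Fin d) ℂ) + 144 • (S + T)
      - 18 • (AA * AA) - 12 • (DD * (S + T) * DD) := by
    rw [← estep]; noncomm_ring
  -- the big algebraic identity
  have hXsum : 3 • (X1*S*X1) + 2 • (X2*S*X2) + X3*S*X3
      = 36 • (P*S*P) + 18 • (AA*S*AA) + 12 • (DD*S*DD) - 216 • S := by
    rw [hX1, hX2, hX3]
    have e3 : 3•((2•P-AA)*S*(2•P-AA)) + 2•((3•P-DD)*S*(3•P-DD)) + (3•AA-2•DD)*S*(3•AA-2•DD)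
        = 36•(P*S*P) + 18•(AA*S*AA) + 12•(DD*S*DD) - 6•((P+AA+DD)*S*(P+AA+DD)) := by
      noncomm_ring
    rw [e3, f7]
    noncomm_ring
  have main : (36:ℕ) • ((2:ℝ) • (1 - S) + (4:ℝ) • T - (1 - P * S * P))
      = 3 • (X1*S*X1) + 2 • (X2*S*X2) + X3*S*X3 + 18 • (AA*(1-S)*AA)
        + 12 • (DD*T*DD) + Hm := by
    rw [hXsum, f6, rsmul_nsmul 2, rsmul_nsmul 4]
    noncomm_ring
  -- positivity of all pieces
  have hX1H : X1ᴴ = X1 := by rw [hX1def]; exact (mcfc_herm hST _).eq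
  have hX2H : X2ᴴ = X2 := by rw [hX2def]; exact (mcfc_herm hST _).eq
  have hX3H : X3ᴴ = X3 := by rw [hX3def]; exact (mcfc_herm hST _).eq
  have hAAH : AAᴴ = AA := by rw [hAAdef]; exact (mcfc_herm hST _).eq
  have hDDH : DDᴴ = DD := by rw [hDDdef]; exact (mcfc_herm hST _).eq
  have p1 : (X1*S*X1).PosSemidef := by
    have := hS.mul_mul_conjTranspose_same X1; rwa [hX1H] at this
  have p2 : (X2*S*X2).PosSemidef := by
    have := hS.mul_mul_conjTranspose_same X2; rwa [hX2H] at this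
  have p3 : (X3*S*X3).PosSemidef := by
    have := hS.mul_mul_conjTranspose_same X3; rwa [hX3H] at this
  have p4 : (AA*(1-S)*AA).PosSemidef := by
    have := h1S.mul_mul_conjTranspose_same AA; rwa [hAAH] at this
  have p5 : (DD*T*DD).PosSemidef := by
    have := hT.mul_mul_conjTranspose_same DD; rwa [hDDH] at this
  have p6 : Hm.PosSemidef := by
    rw [hHmdef]
    exact mcfc_psd hST _ (fun i => h6f_nonneg _ (hNpsd.eigenvalues_nonneg i))
  have bigPSD : (3 • (X1*S*X1) + 2 • (X2*S*X2) + X3*S*X3 + 18 • (AA*(1-S)*AA)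
      + 12 • (DD*T*DD) + Hm).PosSemidef :=
    (((((psd_nsmul p1 3).add (psd_nsmul p2 2)).add p3).add (psd_nsmul p4 18)).add
      (psd_nsmul p5 12)).add p6
  have h36 : ((36:ℝ):ℂ) • ((2:ℝ) • (1 - S) + (4:ℝ) • T - (1 - P * S * P))
      = 3 • (X1*S*X1) + 2 • (X2*S*X2) + X3*S*X3 + 18 • (AA*(1-S)*AA)
        + 12 • (DD*T*DD) + Hm := by
    rw [show ((36:ℝ):ℂ) = ((36:ℕ):ℂ) by norm_num, Nat.cast_smul_eq_nsmul]
    exact main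
  have hfin : (2:ℝ) • (1 - S) + (4:ℝ) • T - (1 - P * S * P)
      = (((36:ℝ)⁻¹ : ℝ) : ℂ) • (3 • (X1*S*X1) + 2 • (X2*S*X2) + X3*S*X3
        + 18 • (AA*(1-S)*AA) + 12 • (DD*T*DD) + Hm) := by
    rw [← h36, smul_smul]
    norm_num
  rw [hfin]
  exact psd_smul bigPSD (by norm_num)
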